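/- Let P_m denote the m-th Legendre polynomial. For every integer n ≥ 1 define I_n⁰ = (1/4)∫_{−1}^{1} (1+u) P_{n−1}(u) du, I_n¹ = −(1/2)∫_{−1}^{1} (1−u²) P'_{n−1}(u) du, and I_n² = (1/2)∫_{−1}^{1} (1−u)(1−u²) P''_{n−1}(u) du. Then: I_n⁰ equals 1/2 for n = 1, 1/6 for n = 2, and 0 for n ≥ 3; I_n¹ equals 0 for n = 1, −2/3 for n = 2, and 0 for n ≥ 3; I_n² equals 0 for n = 1, 2 and equals 2·(−1)^{n−1} for n ≥ 3. Consequently, for every n ≥ 1, I_n⁰ + (1/n)·I_n¹ + (1/(2n(n+1)))·I_n² = (−1)^{n−1}/(n(n+1)). -/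

import Mathlib

noncomputable section

open Polynomial

/-- The `m`-th Legendre polynomial, defined by Rodrigues' formula
`P_m(u) = (1/(2^m m!))·(d/du)^m (u²-1)^m`. -/
def legendreP (m : ℕ) : Polynomial ℝ :=
  ((1 : ℝ) / (2 ^ m * m.factorial)) • (fun q : Polynomial ℝ => derivative q)^[m] ((X ^ 2 - 1) ^ m)

namespace LegendreAux

open intervalIntegral Finset

lemma poly_ibp (p q : Polynomial ℝ) (a b : ℝ) :
    (∫ u in a..b, p.eval u * (derivative q).eval u)
      = p.eval b * q.eval b - p.eval a * q.eval a
        - ∫ u in a..b, (derivative p).eval u * q.eval u :=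
  integral_mul_deriv_eq_deriv_mul (fun x _ => p.hasDerivAt x) (fun x _ => q.hasDerivAt x)
    ((derivative p).continuous.intervalIntegrable _ _)
    ((derivative q).continuous.intervalIntegrable _ _)

lemma poly_ftc (q : Polynomial ℝ) (a b : ℝ) :
    (∫ u in a..b, (derivative q).eval u) = q.eval b - q.eval a :=
  integral_eq_sub_of_hasDerivAt (fun x _ => q.hasDerivAt x)
    ((derivative q).continuous.intervalIntegrable _ _)

lemma integral_eval_eq (g : ℝ → ℝ) (P : Polynomial ℝ) (h : ∀ u, g u = (derivative P).eval u) :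
    (∫ u in (-1:ℝ)..1, g u) = P.eval 1 - P.eval (-1) := by
  simp only [h]; exact poly_ftc P (-1) 1

lemma Q_ne_zero (m : ℕ) : ((X:ℝ[X])^2 - 1)^m ≠ 0 :=
  pow_ne_zero _ (fun h => by simpa using congrArg (eval 0) h)

lemma eval_iter_deriv_Q (m j : ℕ) (hj : j < m) (a : ℝ) (ha : a = 1 ∨ a = -1) :
    (derivative^[j] (((X:ℝ[X])^2 - 1)^m)).eval a = 0 := by
  apply isRoot_iterate_derivative_of_lt_rootMultiplicity
  refine lt_of_lt_of_le hj ?_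
  rw [le_rootMultiplicity_iff (Q_ne_zero m)]
  apply pow_dvd_pow_of_dvd
  rcases ha with rfl | rfl
  · exact ⟨X + 1, by simp; ring⟩
  · exact ⟨X - 1, by simp; ring⟩

lemma Q_factor (m : ℕ) : ((X:ℝ[X])^2 - 1)^m = (X - C (1:ℝ))^m * (X - C (-1:ℝ))^m := by
  rw [← mul_pow]; congr 1; simp; ring

lemma eval_iter_deriv_Q_self (m : ℕ) :
    (derivative^[m] (((X:ℝ[X])^2 - 1)^m)).eval (-1) = (m.factorial : ℝ) * (-2) ^ m := by
  rw [Q_factor, Polynomial.iterate_derivative_mul, eval_finset_sum]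
  rw [Finset.sum_eq_single m]
  · rw [Nat.sub_self, Nat.choose_self, iterate_derivative_X_sub_pow_self]
    simp
    ring
  · intro k hk hkm
    have hk' : k < m := lt_of_le_of_ne (Nat.lt_succ_iff.mp (mem_range.mp hk)) hkm
    have hX : (X + 1 : ℝ[X]) = X - C (-1) := by simp
    have h2 : (derivative^[k] ((X + 1 : ℝ[X])^m)).eval (-1) = 0 := by
      rw [hX, iterate_derivative_X_sub_pow]
      have : ((-1:ℝ) - (-1))^(m-k) = 0 := by
        rw [sub_self, zero_pow (Nat.sub_ne_zero_of_lt hk')]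
      simp [this]
      exact Or.inr (Nat.sub_ne_zero_of_lt hk')
    simp [h2]
  · intro h; simp at h

lemma integral_iter_deriv (m j : ℕ) (h1 : 1 ≤ j) (h2 : j ≤ m) :
    (∫ u in (-1:ℝ)..1, (derivative^[j] (((X:ℝ[X])^2-1)^m)).eval u) = 0 := by
  have hj : j - 1 + 1 = j := Nat.succ_pred_eq_of_pos h1
  rw [← hj, Function.iterate_succ_apply', poly_ftc,
    eval_iter_deriv_Q m (j-1) (by omega) 1 (Or.inl rfl),
    eval_iter_deriv_Q m (j-1) (by omega) (-1) (Or.inr rfl)]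
  ring

lemma integral_X_iter_deriv (m j : ℕ) (h1 : 2 ≤ j) (h2 : j ≤ m) :
    (∫ u in (-1:ℝ)..1, u * (derivative^[j] (((X:ℝ[X])^2-1)^m)).eval u) = 0 := by
  obtain ⟨i, rfl⟩ : ∃ i, j = i + 1 := ⟨j - 1, by omega⟩
  have e : ∀ u:ℝ, u * (derivative^[i+1] (((X:ℝ[X])^2-1)^m)).eval u
      = (X:ℝ[X]).eval u * (derivative (derivative^[i] (((X:ℝ[X])^2-1)^m))).eval u := by
    intro u
    rw [Function.iterate_succ_apply']
    simp
  simp only [e]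
  rw [poly_ibp,
      eval_iter_deriv_Q m i (by omega) 1 (Or.inl rfl),
      eval_iter_deriv_Q m i (by omega) (-1) (Or.inr rfl)]
  simp only [derivative_X, eval_one, one_mul]
  rw [integral_iter_deriv m i (by omega) (by omega)]
  ring

lemma O0 (m : ℕ) (hm : 2 ≤ m) :
    (∫ u in (-1:ℝ)..1, (1 + u) * (derivative^[m] (((X:ℝ[X])^2-1)^m)).eval u) = 0 := by
  have e : ∀ u:ℝ, (1 + u) * (derivative^[m] (((X:ℝ[X])^2-1)^m)).eval u
      = (derivative^[m] (((X:ℝ[X])^2-1)^m)).eval u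
        + u * (derivative^[m] (((X:ℝ[X])^2-1)^m)).eval u := by intro u; ring
  simp only [e]
  rw [intervalIntegral.integral_add (f := fun u : ℝ => (derivative^[m] (((X:ℝ[X])^2-1)^m)).eval u)
      (g := fun u : ℝ => u * (derivative^[m] (((X:ℝ[X])^2-1)^m)).eval u)
      ((Polynomial.continuous _).intervalIntegrable _ _)
      ((continuous_id'.mul (Polynomial.continuous _)).intervalIntegrable _ _),
    integral_iter_deriv m m (by omega) le_rfl,
    integral_X_iter_deriv m m hm le_rfl]
  ring

lemma O1 (m : ℕ) (hm : 2 ≤ m) :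
    (∫ u in (-1:ℝ)..1, (1 - u^2) * (derivative^[m+1] (((X:ℝ[X])^2-1)^m)).eval u) = 0 := by
  have e : ∀ u:ℝ, (1 - u^2) * (derivative^[m+1] (((X:ℝ[X])^2-1)^m)).eval u
      = (1 - X^2 : ℝ[X]).eval u * (derivative (derivative^[m] (((X:ℝ[X])^2-1)^m))).eval u := by
    intro u
    rw [Function.iterate_succ_apply']
    simp
  simp only [e]
  rw [poly_ibp]
  have hd : derivative (1 - X^2 : ℝ[X]) = C (-2) * X := by
    simp
    rw [show (C 2 : ℝ[X]) = 2 from map_ofNat C 2]; norm_num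
  rw [hd]
  have e2 : ∀ u:ℝ, (C (-2:ℝ) * X).eval u * (derivative^[m] (((X:ℝ[X])^2-1)^m)).eval u
      = (-2) * (u * (derivative^[m] (((X:ℝ[X])^2-1)^m)).eval u) := by
    intro u; simp; ring
  simp only [e2]
  rw [intervalIntegral.integral_const_mul, integral_X_iter_deriv m m hm le_rfl]
  simp

lemma O2 (m : ℕ) (hm : 2 ≤ m) :
    (∫ u in (-1:ℝ)..1, (1 - u) * (1 - u^2) * (derivative^[m+2] (((X:ℝ[X])^2-1)^m)).eval u)
      = 4 * (m.factorial : ℝ) * (-2)^m := by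
  set r : ℝ[X] := 1 - X - X^2 + X^3 with hr
  have e : ∀ u:ℝ, (1 - u) * (1 - u^2) * (derivative^[m+2] (((X:ℝ[X])^2-1)^m)).eval u
      = r.eval u * (derivative (derivative^[m+1] (((X:ℝ[X])^2-1)^m))).eval u := by
    intro u
    have hs2 : derivative^[m+2] (((X:ℝ[X])^2-1)^m)
        = derivative (derivative^[m+1] (((X:ℝ[X])^2-1)^m)) :=
      Function.iterate_succ_apply' _ _ _
    rw [hs2, hr]
    simp only [eval_add, eval_sub, eval_one, eval_pow, eval_X]
    ring
  simp only [e]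
  rw [poly_ibp]
  have hr1 : r.eval 1 = 0 := by simp [hr]
  have hrm1 : r.eval (-1) = 0 := by simp [hr]; ring
  rw [hr1, hrm1]
  have e2 : ∀ u:ℝ, (derivative r).eval u * (derivative^[m+1] (((X:ℝ[X])^2-1)^m)).eval u
      = (derivative r).eval u * (derivative (derivative^[m] (((X:ℝ[X])^2-1)^m))).eval u := by
    intro u
    rw [Function.iterate_succ_apply']
  simp only [e2]
  rw [poly_ibp]
  have hd1 : (derivative r).eval 1 = 0 := by simp [hr]; ring
  have hdm1 : (derivative r).eval (-1) = 4 := by simp [hr]; ring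
  rw [hd1, hdm1, eval_iter_deriv_Q_self m]
  have e3 : ∀ u:ℝ, (derivative (derivative r)).eval u * (derivative^[m] (((X:ℝ[X])^2-1)^m)).eval u
      = (-2) * (derivative^[m] (((X:ℝ[X])^2-1)^m)).eval u
        + 6 * (u * (derivative^[m] (((X:ℝ[X])^2-1)^m)).eval u) := by
    intro u; simp [hr]; ring
  simp only [e3]
  rw [intervalIntegral.integral_add (f := fun u : ℝ => (-2) * (derivative^[m] (((X:ℝ[X])^2-1)^m)).eval u)
      (g := fun u : ℝ => 6 * (u * (derivative^[m] (((X:ℝ[X])^2-1)^m)).eval u))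
      (((continuous_const.mul (Polynomial.continuous _))).intervalIntegrable _ _)
      ((continuous_const.mul (continuous_id'.mul (Polynomial.continuous _))).intervalIntegrable _ _),
    intervalIntegral.integral_const_mul, intervalIntegral.integral_const_mul,
    integral_iter_deriv m m (by omega) le_rfl,
    integral_X_iter_deriv m m hm le_rfl]
  ring

end LegendreAux

open LegendreAux intervalIntegral

/-- Values of the three basic Legendre integrals
`I_n⁰ = (1/4)∫_{-1}^1 (1+u)P_{n-1}(u) du`,
`I_n¹ = -(1/2)∫_{-1}^1 (1-u²)P'_{n-1}(u) du`,
`I_n² = (1/2)∫_{-1}^1 (1-u)(1-u²)P''_{n-1}(u) du`, and the resulting eigenvalue formula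
`I_n⁰ + (1/n)I_n¹ + (1/(2n(n+1)))I_n² = (-1)^(n-1)/(n(n+1))` for every `n ≥ 1`. -/
theorem legendre_integrals (n : ℕ) (hn : 1 ≤ n) :
    ((1 / 4 : ℝ) * ∫ u in (-1 : ℝ)..1, (1 + u) * (legendreP (n - 1)).eval u)
        = (if n = 1 then (1 / 2 : ℝ) else if n = 2 then 1 / 6 else 0) ∧
    (-(1 / 2 : ℝ) * ∫ u in (-1 : ℝ)..1,
        (1 - u ^ 2) * (derivative (legendreP (n - 1))).eval u)
        = (if n = 1 then (0 : ℝ) else if n = 2 then -(2 / 3) else 0) ∧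
    ((1 / 2 : ℝ) * ∫ u in (-1 : ℝ)..1,
        (1 - u) * (1 - u ^ 2) * (derivative (derivative (legendreP (n - 1)))).eval u)
        = (if n = 1 ∨ n = 2 then (0 : ℝ) else 2 * (-1 : ℝ) ^ (n - 1)) ∧
    ((1 / 4 : ℝ) * ∫ u in (-1 : ℝ)..1, (1 + u) * (legendreP (n - 1)).eval u)
      + (1 / (n : ℝ)) * (-(1 / 2 : ℝ) * ∫ u in (-1 : ℝ)..1,
          (1 - u ^ 2) * (derivative (legendreP (n - 1))).eval u)
      + (1 / (2 * (n : ℝ) * ((n : ℝ) + 1))) * ((1 / 2 : ℝ) * ∫ u in (-1 : ℝ)..1,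
          (1 - u) * (1 - u ^ 2) * (derivative (derivative (legendreP (n - 1)))).eval u)
      = (-1 : ℝ) ^ (n - 1) / ((n : ℝ) * ((n : ℝ) + 1)) := by
  obtain rfl | rfl | h3 : n = 1 ∨ n = 2 ∨ 3 ≤ n := by omega
  · -- n = 1
    have h0 : legendreP 0 = 1 := by simp [legendreP]
    have hI0 : ((1/4:ℝ) * ∫ u in (-1:ℝ)..1, (1 + u) * (legendreP 0).eval u) = 1/2 := by
      rw [h0]
      rw [integral_eval_eq _ (X + C (2⁻¹:ℝ) * X^2) (fun u => by simp; try ring)]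
      norm_num
    have hI1 : (-(1/2:ℝ) * ∫ u in (-1:ℝ)..1,
        (1 - u^2) * (derivative (legendreP 0)).eval u) = 0 := by
      rw [h0]
      simp
    have hI2 : ((1/2:ℝ) * ∫ u in (-1:ℝ)..1,
        (1 - u) * (1 - u^2) * (derivative (derivative (legendreP 0))).eval u) = 0 := by
      rw [h0]
      simp
    refine ⟨by simpa using hI0, by simpa using hI1, by simpa using hI2, ?_⟩
    simp only [show (1:ℕ) - 1 = 0 from rfl] at *
    rw [hI0, hI1, hI2]
    norm_num
  · -- n = 2
    have h1 : ∀ u:ℝ, (legendreP 1).eval u = u := by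
      intro u; simp [legendreP]; ring
    have h1' : ∀ u:ℝ, (derivative (legendreP 1)).eval u = 1 := by
      intro u; simp [legendreP]; ring
    have h1'' : derivative (derivative (legendreP 1)) = 0 := by
      simp [legendreP]
    have hI0 : ((1/4:ℝ) * ∫ u in (-1:ℝ)..1, (1 + u) * (legendreP 1).eval u) = 1/6 := by
      simp only [h1]
      rw [integral_eval_eq _ (C (2⁻¹:ℝ) * X^2 + C (3⁻¹:ℝ) * X^3) (fun u => by simp; try ring)]
      norm_num
    have hI1 : (-(1/2:ℝ) * ∫ u in (-1:ℝ)..1,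
        (1 - u^2) * (derivative (legendreP 1)).eval u) = -(2/3) := by
      simp only [h1']
      rw [integral_eval_eq _ (X - C (3⁻¹:ℝ) * X^3) (fun u => by simp; try ring)]
      norm_num
    have hI2 : ((1/2:ℝ) * ∫ u in (-1:ℝ)..1,
        (1 - u) * (1 - u^2) * (derivative (derivative (legendreP 1))).eval u) = 0 := by
      rw [h1'']
      simp
    refine ⟨by simpa using hI0, by simpa using hI1, by simpa using hI2, ?_⟩
    simp only [show (2:ℕ) - 1 = 1 from rfl] at *
    rw [hI0, hI1, hI2]
    norm_num
  · -- n ≥ 3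
    set m := n - 1 with hm
    have hm2 : 2 ≤ m := by omega
    set c : ℝ := (1:ℝ) / (2^m * m.factorial) with hc
    have hleg : legendreP m = c • derivative^[m] (((X:ℝ[X])^2-1)^m) := rfl
    have hf : (m.factorial : ℝ) ≠ 0 := Nat.cast_ne_zero.2 m.factorial_ne_zero
    have h2m : (2:ℝ)^m ≠ 0 := by positivity
    have e0 : ∀ u:ℝ, (1 + u) * (legendreP m).eval u
        = c * ((1 + u) * (derivative^[m] (((X:ℝ[X])^2-1)^m)).eval u) := by
      intro u; rw [hleg]; simp; ring
    have e1 : ∀ u:ℝ, (1 - u^2) * (derivative (legendreP m)).eval u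
        = c * ((1 - u^2) * (derivative^[m+1] (((X:ℝ[X])^2-1)^m)).eval u) := by
      intro u
      have hs1 : derivative (derivative^[m] (((X:ℝ[X])^2-1)^m))
          = derivative^[m+1] (((X:ℝ[X])^2-1)^m) :=
        (Function.iterate_succ_apply' _ _ _).symm
      rw [hleg, derivative_smul, hs1]
      simp; ring
    have e2 : ∀ u:ℝ, (1 - u) * (1 - u^2) * (derivative (derivative (legendreP m))).eval u
        = c * ((1 - u) * (1 - u^2) * (derivative^[m+2] (((X:ℝ[X])^2-1)^m)).eval u) := by
      intro u
      have hs1 : derivative (derivative^[m] (((X:ℝ[X])^2-1)^m))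
          = derivative^[m+1] (((X:ℝ[X])^2-1)^m) :=
        (Function.iterate_succ_apply' _ _ _).symm
      have hs2 : derivative (derivative^[m+1] (((X:ℝ[X])^2-1)^m))
          = derivative^[m+2] (((X:ℝ[X])^2-1)^m) :=
        (Function.iterate_succ_apply' _ _ _).symm
      rw [hleg, derivative_smul, hs1, derivative_smul, hs2]
      simp; ring
    have hI0 : ((1/4:ℝ) * ∫ u in (-1:ℝ)..1, (1 + u) * (legendreP m).eval u) = 0 := by
      simp only [e0]
      rw [intervalIntegral.integral_const_mul, O0 m hm2]
      ring
    have hI1 : (-(1/2:ℝ) * ∫ u in (-1:ℝ)..1,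
        (1 - u^2) * (derivative (legendreP m)).eval u) = 0 := by
      simp only [e1]
      rw [intervalIntegral.integral_const_mul, O1 m hm2]
      ring
    have hI2 : ((1/2:ℝ) * ∫ u in (-1:ℝ)..1,
        (1 - u) * (1 - u^2) * (derivative (derivative (legendreP m))).eval u)
        = 2 * (-1:ℝ)^m := by
      simp only [e2]
      rw [intervalIntegral.integral_const_mul, O2 m hm2, hc]
      have hneg : ((-2:ℝ))^m = (-1)^m * 2^m := by rw [← neg_one_mul, mul_pow]
      rw [hneg]
      field_simp
      ring
    have hn1 : n ≠ 1 := by omega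
    have hn2 : n ≠ 2 := by omega
    refine ⟨?_, ?_, ?_, ?_⟩
    · rw [hI0, if_neg hn1, if_neg hn2]
    · rw [hI1, if_neg hn1, if_neg hn2]
    · rw [hI2, if_neg (by omega : ¬(n = 1 ∨ n = 2))]
    · rw [hI0, hI1, hI2]
      have hn0 : (n:ℝ) ≠ 0 := by positivity
      have hnn : (n:ℝ) + 1 ≠ 0 := by positivity
      field_simp
      ring
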